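/- arXiv:2501.11913 — 2 statements merged into one kernel-verified Lean document; each statement's English description precedes it below -/
import Mathlib

section
/- Define Λ(x) = ln(max(|x|, 1)) on ℝ^d. Let p : ℝ^d → [0,∞) be a probability density with ∫_{ℝ^d} p(x)Λ(x) dx < ∞, and let k : ℝ^d → [0,∞) be integrable with ∫_{ℝ^d} k(y) dy = 1 and ∫_{ℝ^d} |y| k(y) dy < ∞. Then ∫_{ℝ^d} (p * k)(x)·Λ(x) dx ≤ ∫_{ℝ^d} p(x)Λ(x) dx + ∫_{ℝ^d} |y| k(y) dy, where (p * k)(x) = ∫_{ℝ^d} k(x−y)p(y) dy. -/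
open MeasureTheory
open scoped ENNReal

lemma lam_lipschitz {E : Type*} [SeminormedAddGroup E] (x y : E) :
    Real.log (max ‖x‖ 1) ≤ Real.log (max ‖y‖ 1) + ‖x - y‖ := by
  set b := max ‖y‖ 1 with hb
  have hb1 : (1:ℝ) ≤ b := le_max_right _ _
  have hb0 : (0:ℝ) < b := lt_of_lt_of_le one_pos hb1
  have ht : (0:ℝ) ≤ ‖x - y‖ := norm_nonneg _
  have h1 : max ‖x‖ 1 ≤ b + ‖x - y‖ := by
    apply max_le
    · have h2 : ‖x‖ - ‖y‖ ≤ ‖x - y‖ := by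
        have := norm_add_le (x - y) y; rw [sub_add_cancel] at this; linarith
      have h3 : ‖y‖ ≤ b := le_max_left _ _
      linarith
    · linarith
  have hlog : Real.log (max ‖x‖ 1) ≤ Real.log (b + ‖x - y‖) :=
    Real.log_le_log (lt_of_lt_of_le one_pos (le_max_right _ _)) h1
  have h4 : Real.log (b + ‖x - y‖) = Real.log b + Real.log ((b + ‖x - y‖) / b) := by
    rw [Real.log_div (by positivity) (ne_of_gt hb0)]; ring
  have h5 : Real.log ((b + ‖x - y‖) / b) ≤ ‖x - y‖ := by
    have := Real.log_le_sub_one_of_pos (x := (b + ‖x - y‖) / b) (by positivity)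
    have h6 : (b + ‖x - y‖) / b - 1 = ‖x - y‖ / b := by field_simp; ring
    have h7 : ‖x - y‖ / b ≤ ‖x - y‖ := by
      rw [div_le_iff₀ hb0]; nlinarith
    linarith
  linarith

lemma ofReal_integral_le_lintegral {α : Type*} [MeasurableSpace α] (μ : Measure α)
    (f : α → ℝ) (h0 : ∀ x, 0 ≤ f x) :
    ENNReal.ofReal (∫ x, f x ∂μ) ≤ ∫⁻ x, ENNReal.ofReal (f x) ∂μ := by
  by_cases hf : Integrable f μ
  · exact (ofReal_integral_eq_lintegral_ofReal hf (.of_forall h0)).le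
  · simp [integral_undef hf]

/-- With `Λ(x) = ln(max(|x|,1))`: if `p` is a probability density with
`∫ p·Λ < ∞` and `k` is a nonnegative integrable kernel with `∫ k = 1` and `∫ |y| k(y) dy < ∞`,
then `∫ (p * k)·Λ ≤ ∫ p·Λ + ∫ |y| k(y) dy`, where `(p*k)(x) = ∫ k(x−y) p(y) dy`. -/
theorem stmt_14 (d : ℕ)
    (p k : EuclideanSpace ℝ (Fin d) → ℝ)
    (hpm : Measurable p) (hkm : Measurable k)
    (hp0 : ∀ x, 0 ≤ p x) (hk0 : ∀ y, 0 ≤ k y)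
    (hpi : Integrable p) (hp1 : (∫ x, p x) = 1)
    (hki : Integrable k) (hk1 : (∫ y, k y) = 1)
    (hpΛ : (∫⁻ x, ENNReal.ofReal (p x * Real.log (max ‖x‖ 1))) < ⊤)
    (hkmom : (∫⁻ y, ENNReal.ofReal (‖y‖ * k y)) < ⊤) :
    (∫⁻ x, ENNReal.ofReal ((∫ y, k (x - y) * p y) * Real.log (max ‖x‖ 1))) ≤
      (∫⁻ x, ENNReal.ofReal (p x * Real.log (max ‖x‖ 1))) +
      ∫⁻ y, ENNReal.ofReal (‖y‖ * k y) := by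
  have hΛ0 : ∀ x : EuclideanSpace ℝ (Fin d), 0 ≤ Real.log (max ‖x‖ 1) :=
    fun x => Real.log_nonneg (le_max_right _ _)
  have hΛm : Measurable fun x : EuclideanSpace ℝ (Fin d) => Real.log (max ‖x‖ 1) :=
    Real.measurable_log.comp (measurable_norm.max measurable_const)
  set L : EuclideanSpace ℝ (Fin d) → ℝ≥0∞ :=
    fun x => ENNReal.ofReal (Real.log (max ‖x‖ 1)) with hL
  set K : EuclideanSpace ℝ (Fin d) → ℝ≥0∞ := fun z => ENNReal.ofReal (k z) with hK
  set P : EuclideanSpace ℝ (Fin d) → ℝ≥0∞ := fun y => ENNReal.ofReal (p y) with hP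
  have hLm : Measurable L := hΛm.ennreal_ofReal
  have hKm : Measurable K := hkm.ennreal_ofReal
  have hPm : Measurable P := hpm.ennreal_ofReal
  have hsub : Measurable fun q : EuclideanSpace ℝ (Fin d) × EuclideanSpace ℝ (Fin d) =>
      q.1 - q.2 := measurable_fst.sub measurable_snd
  have hKq : Measurable fun q : EuclideanSpace ℝ (Fin d) × EuclideanSpace ℝ (Fin d) =>
      K (q.1 - q.2) := hKm.comp hsub
  have hPq : Measurable fun q : EuclideanSpace ℝ (Fin d) × EuclideanSpace ℝ (Fin d) =>
      P q.2 := hPm.comp measurable_snd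
  have hnormq : Measurable fun q : EuclideanSpace ℝ (Fin d) × EuclideanSpace ℝ (Fin d) =>
      ENNReal.ofReal ‖q.1 - q.2‖ := (measurable_norm.comp hsub).ennreal_ofReal
  have hKtot : (∫⁻ z, K z) = 1 := by
    rw [hK, ← ofReal_integral_eq_lintegral_ofReal hki (.of_forall hk0), hk1, ENNReal.ofReal_one]
  have hPtot : (∫⁻ y, P y) = 1 := by
    rw [hP, ← ofReal_integral_eq_lintegral_ofReal hpi (.of_forall hp0), hp1, ENNReal.ofReal_one]
  -- step 1
  have step1 : (∫⁻ x, ENNReal.ofReal ((∫ y, k (x - y) * p y) * Real.log (max ‖x‖ 1))) ≤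
      ∫⁻ x, ∫⁻ y, K (x - y) * P y * L x := by
    refine lintegral_mono fun x => ?_
    have hnn : 0 ≤ ∫ y, k (x - y) * p y :=
      integral_nonneg fun y => mul_nonneg (hk0 _) (hp0 _)
    rw [ENNReal.ofReal_mul hnn]
    have h1 : ENNReal.ofReal (∫ y, k (x - y) * p y) ≤ ∫⁻ y, K (x - y) * P y := by
      refine (ofReal_integral_le_lintegral _ _ fun y => mul_nonneg (hk0 _) (hp0 _)).trans ?_
      refine lintegral_mono fun y => ?_
      rw [hK, hP, ENNReal.ofReal_mul (hk0 _)]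
    calc ENNReal.ofReal (∫ y, k (x - y) * p y) * ENNReal.ofReal (Real.log (max ‖x‖ 1))
        ≤ (∫⁻ y, K (x - y) * P y) * L x := mul_le_mul_left h1 _
      _ = ∫⁻ y, K (x - y) * P y * L x :=
          (lintegral_mul_const _ ((hKm.comp (measurable_const.sub measurable_id)).mul hPm)).symm
  -- step 2
  have step2 : (∫⁻ x, ∫⁻ y, K (x - y) * P y * L x) ≤
      ∫⁻ x, ∫⁻ y, (K (x - y) * P y * L y + K (x - y) * P y * ENNReal.ofReal ‖x - y‖) := by
    refine lintegral_mono fun x => lintegral_mono fun y => ?_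
    rw [← mul_add]
    refine mul_le_mul_right ?_ _
    rw [hL, ← ENNReal.ofReal_add (hΛ0 y) (norm_nonneg _)]
    exact ENNReal.ofReal_le_ofReal (lam_lipschitz x y)
  -- split
  have hm1 : Measurable fun q : EuclideanSpace ℝ (Fin d) × EuclideanSpace ℝ (Fin d) =>
      K (q.1 - q.2) * P q.2 * L q.2 := (hKq.mul hPq).mul (hLm.comp measurable_snd)
  have hm2 : Measurable fun q : EuclideanSpace ℝ (Fin d) × EuclideanSpace ℝ (Fin d) =>
      K (q.1 - q.2) * P q.2 * ENNReal.ofReal ‖q.1 - q.2‖ := (hKq.mul hPq).mul hnormq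
  have split : (∫⁻ x, ∫⁻ y, (K (x - y) * P y * L y + K (x - y) * P y * ENNReal.ofReal ‖x - y‖)) =
      (∫⁻ x, ∫⁻ y, K (x - y) * P y * L y) +
      ∫⁻ x, ∫⁻ y, K (x - y) * P y * ENNReal.ofReal ‖x - y‖ := by
    have : ∀ x : EuclideanSpace ℝ (Fin d),
        (∫⁻ y, (K (x - y) * P y * L y + K (x - y) * P y * ENNReal.ofReal ‖x - y‖)) =
        (∫⁻ y, K (x - y) * P y * L y) + ∫⁻ y, K (x - y) * P y * ENNReal.ofReal ‖x - y‖ :=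
      fun x => lintegral_add_left
        (((hKm.comp (measurable_const.sub measurable_id)).mul hPm).mul hLm) _
    simp_rw [this]
    exact lintegral_add_left
      (Measurable.lintegral_prod_right (f := fun x y => K (x - y) * P y * L y) hm1) _
  -- Term A
  have termA : (∫⁻ x, ∫⁻ y, K (x - y) * P y * L y) =
      ∫⁻ x, ENNReal.ofReal (p x * Real.log (max ‖x‖ 1)) := by
    rw [lintegral_lintegral_swap (by fun_prop)]
    have inner : ∀ y : EuclideanSpace ℝ (Fin d),
        (∫⁻ x, K (x - y) * P y * L y) = P y * L y := by
      intro y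
      calc (∫⁻ x, K (x - y) * P y * L y) = ∫⁻ x, K (x - y) * (P y * L y) := by
            simp_rw [mul_assoc]
        _ = (∫⁻ x, K (x - y)) * (P y * L y) :=
            lintegral_mul_const _ (hKm.comp (measurable_id.sub measurable_const))
        _ = P y * L y := by rw [lintegral_sub_right_eq_self K y, hKtot, one_mul]
    simp_rw [inner]
    refine lintegral_congr fun y => ?_
    rw [hP, hL, ← ENNReal.ofReal_mul (hp0 _)]
  -- Term B
  have termB : (∫⁻ x, ∫⁻ y, K (x - y) * P y * ENNReal.ofReal ‖x - y‖) =
      ∫⁻ y, ENNReal.ofReal (‖y‖ * k y) := by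
    rw [lintegral_lintegral_swap (by fun_prop)]
    have hC : (∫⁻ z, K z * ENNReal.ofReal ‖z‖) = ∫⁻ z, ENNReal.ofReal (‖z‖ * k z) := by
      refine lintegral_congr fun z => ?_
      rw [hK, ← ENNReal.ofReal_mul (hk0 _), mul_comm]
    have inner : ∀ y : EuclideanSpace ℝ (Fin d),
        (∫⁻ x, K (x - y) * P y * ENNReal.ofReal ‖x - y‖) =
        (∫⁻ z, ENNReal.ofReal (‖z‖ * k z)) * P y := by
      intro y
      calc (∫⁻ x, K (x - y) * P y * ENNReal.ofReal ‖x - y‖)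
          = ∫⁻ x, K (x - y) * ENNReal.ofReal ‖x - y‖ * P y := by
            simp_rw [mul_right_comm]
        _ = (∫⁻ x, K (x - y) * ENNReal.ofReal ‖x - y‖) * P y :=
            lintegral_mul_const _ ((hKm.comp (measurable_id.sub measurable_const)).mul
              ((measurable_id.sub measurable_const).norm.ennreal_ofReal))
        _ = (∫⁻ z, ENNReal.ofReal (‖z‖ * k z)) * P y := by
            rw [lintegral_sub_right_eq_self (fun z => K z * ENNReal.ofReal ‖z‖) y, hC]
    simp_rw [inner]
    rw [lintegral_const_mul _ hPm, hPtot, mul_one]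
  calc (∫⁻ x, ENNReal.ofReal ((∫ y, k (x - y) * p y) * Real.log (max ‖x‖ 1)))
      ≤ ∫⁻ x, ∫⁻ y, K (x - y) * P y * L x := step1
    _ ≤ ∫⁻ x, ∫⁻ y, (K (x - y) * P y * L y + K (x - y) * P y * ENNReal.ofReal ‖x - y‖) := step2
    _ = (∫⁻ x, ∫⁻ y, K (x - y) * P y * L y) +
        ∫⁻ x, ∫⁻ y, K (x - y) * P y * ENNReal.ofReal ‖x - y‖ := split
    _ = (∫⁻ x, ENNReal.ofReal (p x * Real.log (max ‖x‖ 1))) +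
        ∫⁻ y, ENNReal.ofReal (‖y‖ * k y) := by rw [termA, termB]
end

section
/- Suppose p : [0,T] × ℝ^d → (0,∞) is smooth and positive, for every t the function p(t,·) is a probability density, and set θ(t,x) = φ(p(t,x)) + Φ(x). Then ∫₀^T ∫_{ℝ^d} (2f(p(t,x))/p(t,x))·|∇θ(t,x)|²·p(t,x) dx dt ≤ 4 ∫₀^T ∫_{ℝ^d} (γ₂³·|∇p(t,x)|²/(b₀²·p(t,x)) + γ₂·|∇Φ(x)|²·p(t,x)) dx dt. In particular, if ∫₀^T∫ |∇p|²/p dx dt < ∞ and ∫₀^T∫ |∇Φ|² p dx dt < ∞, then the left-hand side is finite. -/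
open MeasureTheory
open scoped ENNReal

open intervalIntegral Set Filter Topology Real InnerProductSpace

lemma aux_phi (f b : ℝ → ℝ) (γ₁ γ₂ b₀ b₁ : ℝ)
    (hf : ContDiff ℝ (⊤ : ℕ∞) f)
    (hγ₁ : 0 < γ₁) (hγ₁₂ : γ₁ < γ₂)
    (hf' : ∀ r, γ₁ ≤ deriv f r ∧ deriv f r ≤ γ₂)
    (hbsm : ContDiff ℝ (⊤ : ℕ∞) b)
    (hb₀ : 0 < b₀) (hbb : ∀ s, b₀ ≤ b s ∧ b s ≤ b₁)
    (g η φ : ℝ → ℝ)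
    (hg : ∀ s, g s = ∫ w in (1:ℝ)..s, deriv f w / (w * b w))
    (hη : ∀ r, η r = ∫ s in (0:ℝ)..r, g s)
    (hφ : ∀ u, φ u = η u / u)
    (u : ℝ) (hu : 0 < u) :
    ∃ c : ℝ, HasDerivAt φ c u ∧ 0 ≤ c ∧ c * u ≤ γ₂ / b₀ := by
  have hγ₂ : 0 < γ₂ := hγ₁.trans hγ₁₂
  have hbpos : ∀ s, 0 < b s := fun s => hb₀.trans_le (hbb s).1
  set h : ℝ → ℝ := fun w => deriv f w / (w * b w) with hh
  have hfC : Continuous (deriv f) := hf.continuous_deriv (by simp)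
  have hbC : Continuous b := hbsm.continuous
  -- continuity of h away from 0
  have hhca : ∀ w : ℝ, w ≠ 0 → ContinuousAt h w := by
    intro w hw
    exact (hfC.continuousAt).div ((continuous_id.mul hbC).continuousAt)
      (mul_ne_zero hw (hbpos w).ne')
  have hhco : ContinuousOn h (Ioi (0:ℝ)) := fun w hw =>
    (hhca w (ne_of_gt hw)).continuousWithinAt
  -- h bounds on positives
  have hhnn : ∀ w : ℝ, 0 < w → 0 ≤ h w := fun w hw =>
    div_nonneg ((hγ₁.le.trans (hf' w).1)) (mul_nonneg hw.le (hbpos w).le)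
  have hhub : ∀ w : ℝ, 0 < w → h w ≤ (γ₂ / b₀) * w⁻¹ := by
    intro w hw
    have h1 : h w ≤ γ₂ / (w * b₀) :=
      div_le_div₀ hγ₂.le (hf' w).2 (mul_pos hw hb₀) (by nlinarith [(hbb w).1])
    have h2 : γ₂ / (w * b₀) = (γ₂ / b₀) * w⁻¹ := by
      rw [mul_comm w b₀, div_mul_eq_div_div, div_eq_mul_inv (γ₂ / b₀)]
    linarith [h1, h2.le]
  -- interval integrability of h on positive intervals
  have hhint : ∀ a c : ℝ, 0 < a → 0 < c → IntervalIntegrable h volume a c := by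
    intro a c ha hc
    apply ContinuousOn.intervalIntegrable
    apply hhco.mono
    intro x hx
    exact lt_of_lt_of_le (lt_min ha hc) hx.1
  -- derivative of g
  have hgd : ∀ s : ℝ, 0 < s → HasDerivAt g (h s) s := by
    intro s hs
    have H : HasDerivAt (fun s => ∫ w in (1:ℝ)..s, h w) (h s) s := by
      apply integral_hasDerivAt_right (hhint 1 s one_pos hs)
      · exact ContinuousOn.stronglyMeasurableAtFilter isOpen_Ioi hhco s hs
      · exact hhca s hs.ne'
    exact H.congr_of_eventuallyEq (Eventually.of_forall hg)
  have hgco : ContinuousOn g (Ioi (0:ℝ)) := fun s hs =>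
    ((hgd s hs).continuousAt).continuousWithinAt
  -- helpers for the majorant (γ₂/b₀) * w⁻¹
  have hposmem : ∀ a c : ℝ, 0 < a → 0 < c → (0:ℝ) ∉ uIcc a c := by
    intro a c ha hc hx
    exact absurd hx.1 (not_le.mpr (lt_min ha hc))
  have hinvint : ∀ a c : ℝ, 0 < a → 0 < c →
      IntervalIntegrable (fun w : ℝ => (γ₂ / b₀) * w⁻¹) volume a c := by
    intro a c ha hc
    apply ContinuousOn.intervalIntegrable
    apply continuousOn_const.mul
    apply ContinuousOn.inv₀ continuousOn_id
    intro x hx hx0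
    exact absurd (hx0 ▸ hx) (hposmem a c ha hc)
  have hinvval : ∀ a c : ℝ, 0 < a → 0 < c →
      (∫ w in a..c, (γ₂ / b₀) * w⁻¹) = (γ₂ / b₀) * (Real.log c - Real.log a) := by
    intro a c ha hc
    rw [intervalIntegral.integral_const_mul, integral_inv (hposmem a c ha hc),
      Real.log_div hc.ne' ha.ne']
  -- bound |g s| ≤ (γ₂/b₀) * |log s|
  have hgb : ∀ s : ℝ, 0 < s → |g s| ≤ (γ₂ / b₀) * |Real.log s| := by
    intro s hs
    have hcpos : 0 < γ₂ / b₀ := div_pos hγ₂ hb₀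
    rcases le_or_gt 1 s with h1s | h1s
    · have hnn : 0 ≤ g s := by
        rw [hg]
        exact intervalIntegral.integral_nonneg h1s
          (fun w hw => hhnn w (lt_of_lt_of_le one_pos hw.1))
      have hub : g s ≤ (γ₂ / b₀) * Real.log s := by
        rw [hg]
        calc (∫ w in (1:ℝ)..s, h w) ≤ ∫ w in (1:ℝ)..s, (γ₂ / b₀) * w⁻¹ := by
              apply intervalIntegral.integral_mono_on h1s
                (hhint 1 s one_pos (lt_of_lt_of_le one_pos h1s))
                (hinvint 1 s one_pos (lt_of_lt_of_le one_pos h1s))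
              exact fun w hw => hhub w (lt_of_lt_of_le one_pos hw.1)
          _ = (γ₂ / b₀) * Real.log s := by
              rw [hinvval 1 s one_pos (lt_of_lt_of_le one_pos h1s), Real.log_one, sub_zero]
      rw [abs_of_nonneg hnn, abs_of_nonneg (Real.log_nonneg h1s)]
      exact hub
    · have hsym : g s = -(∫ w in s..(1:ℝ), h w) := by
        rw [hg]; exact intervalIntegral.integral_symm s 1
      have hnn : 0 ≤ ∫ w in s..(1:ℝ), h w :=
        intervalIntegral.integral_nonneg h1s.le (fun w hw => hhnn w (lt_of_lt_of_le hs hw.1))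
      have hub : (∫ w in s..(1:ℝ), h w) ≤ (γ₂ / b₀) * (-Real.log s) := by
        calc (∫ w in s..(1:ℝ), h w) ≤ ∫ w in s..(1:ℝ), (γ₂ / b₀) * w⁻¹ := by
              apply intervalIntegral.integral_mono_on h1s.le (hhint s 1 hs one_pos)
                (hinvint s 1 hs one_pos)
              exact fun w hw => hhub w (lt_of_lt_of_le hs hw.1)
          _ = (γ₂ / b₀) * (-Real.log s) := by
              rw [hinvval s 1 hs one_pos, Real.log_one, zero_sub]
      rw [hsym, abs_neg, abs_of_nonneg hnn,
        abs_of_nonpos (Real.log_nonpos hs.le h1s.le)]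
      exact hub
  have hcpos : 0 < γ₂ / b₀ := div_pos hγ₂ hb₀
  -- |log s| ≤ 2 s^(-1/2) + s for s > 0
  have hlog : ∀ s : ℝ, 0 < s → |Real.log s| ≤ 2 * s ^ (-(1/2) : ℝ) + s := by
    intro s hs
    have hrp : (0:ℝ) ≤ s ^ (-(1/2) : ℝ) := Real.rpow_nonneg hs.le _
    rcases le_or_gt 1 s with h1s | h1s
    · rw [abs_of_nonneg (Real.log_nonneg h1s)]
      have := Real.log_le_sub_one_of_pos hs
      linarith
    · rw [abs_of_nonpos (Real.log_nonpos hs.le h1s.le)]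
      have h2 : Real.log (s ^ (-(1/2) : ℝ)) = (-(1/2)) * Real.log s := Real.log_rpow hs _
      have h3 : Real.log (s ^ (-(1/2) : ℝ)) ≤ s ^ (-(1/2) : ℝ) - 1 :=
        Real.log_le_sub_one_of_pos (Real.rpow_pos_of_pos hs _)
      nlinarith
  -- integrability of g on (0, r]
  have hgint : ∀ r : ℝ, 0 < r → IntegrableOn g (Ioc (0:ℝ) r) volume := by
    intro r hr
    have hmeas : AEStronglyMeasurable g (volume.restrict (Ioc (0:ℝ) r)) :=
      (hgco.mono Ioc_subset_Ioi_self).aestronglyMeasurable measurableSet_Ioc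
    have hGii : IntervalIntegrable
        (fun s : ℝ => (γ₂ / b₀) * (2 * s ^ (-(1/2) : ℝ) + s)) volume 0 r :=
      (((intervalIntegrable_rpow' (by norm_num)).const_mul 2).add
        intervalIntegrable_id).const_mul _
    have hGint : IntegrableOn (fun s : ℝ => (γ₂ / b₀) * (2 * s ^ (-(1/2) : ℝ) + s))
        (Ioc (0:ℝ) r) volume :=
      (intervalIntegrable_iff_integrableOn_Ioc_of_le hr.le).mp hGii
    apply MeasureTheory.Integrable.mono hGint hmeas
    rw [ae_restrict_iff' measurableSet_Ioc]
    apply ae_of_all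
    intro s hs
    have hs0 : 0 < s := hs.1
    have hGnn : 0 ≤ (γ₂ / b₀) * (2 * s ^ (-(1/2) : ℝ) + s) :=
      mul_nonneg hcpos.le (by positivity)
    rw [Real.norm_eq_abs, Real.norm_eq_abs, abs_of_nonneg hGnn]
    calc |g s| ≤ (γ₂ / b₀) * |Real.log s| := hgb s hs0
      _ ≤ (γ₂ / b₀) * (2 * s ^ (-(1/2) : ℝ) + s) :=
          mul_le_mul_of_nonneg_left (hlog s hs0) hcpos.le
  have hgii : ∀ r : ℝ, 0 < r → IntervalIntegrable g volume 0 r := fun r hr =>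
    (intervalIntegrable_iff_integrableOn_Ioc_of_le hr.le).mpr (hgint r hr)
  -- derivative of η
  have hηd : ∀ r : ℝ, 0 < r → HasDerivAt η (g r) r := by
    intro r hr
    have H : HasDerivAt (fun r => ∫ s in (0:ℝ)..r, g s) (g r) r :=
      integral_hasDerivAt_right (hgii r hr)
        (ContinuousOn.stronglyMeasurableAtFilter isOpen_Ioi hgco r hr)
        ((hgd r hr).continuousAt)
    exact H.congr_of_eventuallyEq (Eventually.of_forall hη)
  -- the function k r = r * g r - η r
  set k : ℝ → ℝ := fun r => r * g r - η r with hkdef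
  have hkd : ∀ r : ℝ, 0 < r → HasDerivAt k (deriv f r / b r) r := by
    intro r hr
    have h1 : HasDerivAt k (1 * g r + r * h r - g r) r :=
      ((hasDerivAt_id r).mul (hgd r hr)).sub (hηd r hr)
    have h2 : 1 * g r + r * h r - g r = deriv f r / b r := by
      simp only [hh, one_mul]
      rw [mul_div_assoc', mul_div_mul_left _ _ hr.ne']
      ring
    rwa [h2] at h1
  have hkdb : ∀ r : ℝ, 0 < r → 0 ≤ deriv f r / b r ∧ deriv f r / b r ≤ γ₂ / b₀ := by
    intro r _
    constructor
    · exact div_nonneg (hγ₁.le.trans (hf' r).1) (hbpos r).le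
    · exact div_le_div₀ hγ₂.le (hf' r).2 hb₀ (hbb r).1
  -- k tends to 0 from the right at 0
  have hk0 : Tendsto k (𝓝[>] (0:ℝ)) (𝓝 0) := by
    have part1 : Tendsto (fun r => r * g r) (𝓝[>] (0:ℝ)) (𝓝 0) := by
      rw [tendsto_zero_iff_norm_tendsto_zero]
      apply squeeze_zero' (Eventually.of_forall fun r => norm_nonneg _)
        (g := fun r => (γ₂ / b₀) * |r * Real.log r|)
      · filter_upwards [self_mem_nhdsWithin] with r hr
        have h1 : |g r| ≤ (γ₂ / b₀) * |Real.log r| := hgb r hr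
        have h2 : |r * g r| = |r| * |g r| := abs_mul _ _
        have h3 : |r * Real.log r| = |r| * |Real.log r| := abs_mul _ _
        rw [Real.norm_eq_abs, h2, h3]
        nlinarith [abs_nonneg r, abs_nonneg (g r), abs_nonneg (Real.log r)]
      · have h4 : Tendsto (fun r : ℝ => (γ₂ / b₀) * |r * Real.log r|) (𝓝 0)
            (𝓝 ((γ₂ / b₀) * |(0:ℝ) * Real.log 0|)) :=
          (Real.continuous_mul_log.abs.tendsto 0).const_mul _
        simp only [zero_mul, abs_zero, mul_zero] at h4
        exact h4.mono_left nhdsWithin_le_nhds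
    have part2 : Tendsto η (𝓝[>] (0:ℝ)) (𝓝 0) := by
      have hco := intervalIntegral.continuousOn_primitive_interval' (hgii 1 one_pos)
        (left_mem_uIcc (a := (0:ℝ)) (b := 1))
      have hcw : ContinuousWithinAt η (uIcc (0:ℝ) 1) 0 :=
        (hco 0 left_mem_uIcc).congr (fun x _ => hη x) (hη 0)
      have hη0 : η 0 = 0 := by rw [hη, intervalIntegral.integral_same]
      have h5 : Tendsto η (𝓝[uIcc (0:ℝ) 1] 0) (𝓝 0) := by
        have := hcw.tendsto
        rwa [hη0] at this
      have h6 : Tendsto η (𝓝[Ioc (0:ℝ) 1] 0) (𝓝 0) := by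
        apply h5.mono_left
        apply nhdsWithin_mono
        rw [uIcc_of_le (by norm_num : (0:ℝ) ≤ 1)]
        exact Ioc_subset_Icc_self
      rwa [nhdsWithin_Ioc_eq_nhdsGT one_pos] at h6
    have := part1.sub part2
    simpa using this
  -- bounds on k
  have hkb : ∀ r : ℝ, 0 < r → 0 ≤ k r ∧ k r ≤ (γ₂ / b₀) * r := by
    intro r hr
    have hmono : ∀ ε, ε ∈ Ioo (0:ℝ) r → k ε ≤ k r ∧ k r ≤ k ε + (γ₂ / b₀) * (r - ε) := by
      intro ε hε
      obtain ⟨c, hc, hceq⟩ := exists_deriv_eq_slope k hε.2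
        (fun y hy => ((hkd y (hε.1.trans_le hy.1)).continuousAt).continuousWithinAt)
        (fun y hy => ((hkd y (hε.1.trans hy.1)).differentiableAt).differentiableWithinAt)
      have hcd : deriv k c = deriv f c / b c := (hkd c (hε.1.trans hc.1)).deriv
      have hsub : 0 < r - ε := sub_pos.mpr hε.2
      have heq : k r - k ε = (deriv f c / b c) * (r - ε) := by
        rw [← hcd, hceq]
        field_simp
      obtain ⟨hd0, hd1⟩ := hkdb c (hε.1.trans hc.1)
      constructor
      · have h9 : (0:ℝ) ≤ k r - k ε := heq ▸ mul_nonneg hd0 hsub.le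
        linarith
      · have h9 : k r - k ε ≤ (γ₂ / b₀) * (r - ε) := by
          rw [heq]
          exact mul_le_mul_of_nonneg_right hd1 hsub.le
        linarith
    constructor
    · apply le_of_tendsto hk0
      filter_upwards [Ioo_mem_nhdsGT_of_mem ⟨le_refl (0:ℝ), hr⟩] with ε hε
      exact (hmono ε hε).1
    · have htt : Tendsto (fun ε : ℝ => k ε + (γ₂ / b₀) * (r - ε)) (𝓝[>] (0:ℝ))
          (𝓝 (0 + (γ₂ / b₀) * (r - 0))) := by
        apply hk0.add
        exact ((continuous_const.mul (continuous_const.sub continuous_id)).tendsto 0).mono_left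
          nhdsWithin_le_nhds
      have h7 : k r ≤ 0 + (γ₂ / b₀) * (r - 0) := by
        apply ge_of_tendsto htt
        filter_upwards [Ioo_mem_nhdsGT_of_mem ⟨le_refl (0:ℝ), hr⟩] with ε hε
        exact (hmono ε hε).2
      simpa using h7
  -- conclude: derivative of φ
  have hφd : HasDerivAt φ ((g u * u - η u * 1) / u ^ 2) u :=
    (((hηd u hu).div (hasDerivAt_id u) hu.ne')).congr_of_eventuallyEq
      (Eventually.of_forall hφ)
  refine ⟨_, hφd, ?_, ?_⟩
  · apply div_nonneg _ (sq_nonneg u)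
    have := (hkb u hu).1
    simp only [hkdef] at this
    nlinarith
  · have hk2 := (hkb u hu).2
    simp only [hkdef] at hk2
    rw [div_mul_eq_mul_div, div_le_iff₀ (by positivity : (0:ℝ) < u ^ 2)]
    nlinarith


/-- For smooth positive `p` with `p(t,·)` a probability density and
`θ(t,x) = φ(p(t,x)) + Φ(x)`,
`∫₀^T ∫ (2f(p)/p)·|∇θ|²·p dx dt ≤ 4 ∫₀^T ∫ (γ₂³|∇p|²/(b₀²p) + γ₂|∇Φ|²p) dx dt`;
stated with lower integrals so that finiteness of the right-hand side gives finiteness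
of the left-hand side. -/
theorem stmt_15 (d : ℕ) (T : ℝ) (hT : 0 < T)
    (f b : ℝ → ℝ) (γ₁ γ₂ b₀ b₁ : ℝ)
    (hf : ContDiff ℝ (⊤ : ℕ∞) f) (hf0 : f 0 = 0) (hfnn : ∀ r, 0 ≤ f r)
    (hγ₁ : 0 < γ₁) (hγ₁₂ : γ₁ < γ₂)
    (hf' : ∀ r, γ₁ ≤ deriv f r ∧ deriv f r ≤ γ₂)
    (hbsm : ContDiff ℝ (⊤ : ℕ∞) b) (hbnn : ∀ s, 0 ≤ b s)
    (hb₀ : 0 < b₀) (hb₀₁ : b₀ < b₁)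
    (hbb : ∀ s, b₀ ≤ b s ∧ b s ≤ b₁)
    (Φ : EuclideanSpace ℝ (Fin d) → ℝ)
    (hΦ : ContDiff ℝ (⊤ : ℕ∞) Φ) (hΦnn : ∀ x, 0 ≤ Φ x)
    (g η φ : ℝ → ℝ)
    (hg : ∀ s, g s = ∫ w in (1:ℝ)..s, deriv f w / (w * b w))
    (hη : ∀ r, η r = ∫ s in (0:ℝ)..r, g s)
    (hφ : ∀ u, φ u = η u / u)
    (p : ℝ → EuclideanSpace ℝ (Fin d) → ℝ)
    (hpsm : ContDiff ℝ (⊤ : ℕ∞) (fun q : ℝ × EuclideanSpace ℝ (Fin d) => p q.1 q.2))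
    (hppos : ∀ t x, 0 < p t x)
    (hdens : ∀ t ∈ Set.Icc (0:ℝ) T, (∫ x, p t x) = 1)
    (θ : ℝ → EuclideanSpace ℝ (Fin d) → ℝ)
    (hθ : ∀ t x, θ t x = φ (p t x) + Φ x) :
    (∫⁻ t in Set.Icc (0:ℝ) T, ∫⁻ x,
        ENNReal.ofReal (2 * f (p t x) / p t x * ‖gradient (θ t) x‖ ^ 2 * p t x)) ≤
      4 * ∫⁻ t in Set.Icc (0:ℝ) T, ∫⁻ x,
        ENNReal.ofReal (γ₂ ^ 3 * ‖gradient (p t) x‖ ^ 2 / (b₀ ^ 2 * p t x) +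
          γ₂ * ‖gradient Φ x‖ ^ 2 * p t x) := by
  have hγ₂ : 0 < γ₂ := hγ₁.trans hγ₁₂
  -- f u ≤ γ₂ u
  have hfu : ∀ u : ℝ, 0 < u → f u ≤ γ₂ * u := by
    intro u hu
    obtain ⟨c, _, hceq⟩ := exists_deriv_eq_slope f hu (hf.continuous.continuousOn)
      ((hf.differentiable (by simp)).differentiableOn)
    have h1 : (f u - f 0) / (u - 0) ≤ γ₂ := hceq ▸ (hf' c).2
    rw [hf0, sub_zero, sub_zero] at h1
    calc f u = f u / u * u := by field_simp
      _ ≤ γ₂ * u := mul_le_mul_of_nonneg_right h1 hu.le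
  -- differentiability of p t
  have hpd : ∀ t x, DifferentiableAt ℝ (p t) x := by
    intro t x
    have h1 : DifferentiableAt ℝ (fun q : ℝ × EuclideanSpace ℝ (Fin d) => p q.1 q.2) (t, x) :=
      (hpsm.differentiable (by simp)) _
    have h2 : DifferentiableAt ℝ (fun y : EuclideanSpace ℝ (Fin d) => (t, y)) x :=
      (differentiableAt_const t).prodMk differentiableAt_id
    exact h1.comp x h2
  -- pointwise inequality
  have key : ∀ t x, ENNReal.ofReal (2 * f (p t x) / p t x * ‖gradient (θ t) x‖ ^ 2 * p t x)
      ≤ 4 * ENNReal.ofReal (γ₂ ^ 3 * ‖gradient (p t) x‖ ^ 2 / (b₀ ^ 2 * p t x) +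
        γ₂ * ‖gradient Φ x‖ ^ 2 * p t x) := by
    intro t x
    set u := p t x with hu_def
    have hu : 0 < u := hppos t x
    obtain ⟨c, hcd, hc0, hcu⟩ := aux_phi f b γ₁ γ₂ b₀ b₁ hf hγ₁ hγ₁₂ hf' hbsm hb₀ hbb
      g η φ hg hη hφ u hu
    set P := gradient (p t) x with hP_def
    set G := gradient Φ x with hG_def
    -- gradient of θ t
    have hPf : HasFDerivAt (p t) (toDual ℝ _ P) x := (hpd t x).hasGradientAt.hasFDerivAt
    have hcomp : HasFDerivAt (fun y => φ (p t y)) (c • toDual ℝ _ P) x :=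
      hcd.comp_hasFDerivAt x hPf
    have hΦf : HasFDerivAt Φ (toDual ℝ _ G) x :=
      ((hΦ.differentiable (by simp)) x).hasGradientAt.hasFDerivAt
    have hgradθ : HasGradientAt (θ t) (c • P + G) x := by
      rw [hasGradientAt_iff_hasFDerivAt]
      have hmap : (toDual ℝ (EuclideanSpace ℝ (Fin d))) (c • P + G)
          = c • toDual ℝ _ P + toDual ℝ _ G := by
        simp [map_add, _root_.map_smul]
      rw [hmap]
      have hθt : θ t = fun y => φ (p t y) + Φ y := funext (hθ t)
      rw [hθt]
      exact hcomp.add hΦf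
    have hθeq : gradient (θ t) x = c • P + G := hgradθ.gradient
    -- norms
    set A := ‖P‖ with hA_def
    set B := ‖G‖ with hB_def
    have hA0 : 0 ≤ A := norm_nonneg _
    have hB0 : 0 ≤ B := norm_nonneg _
    have hS : ‖gradient (θ t) x‖ ≤ c * A + B := by
      rw [hθeq]
      calc ‖c • P + G‖ ≤ ‖c • P‖ + ‖G‖ := norm_add_le _ _
        _ = c * A + B := by rw [norm_smul, Real.norm_eq_abs, abs_of_nonneg hc0]
    have hS2 : ‖gradient (θ t) x‖ ^ 2 ≤ 2 * c ^ 2 * A ^ 2 + 2 * B ^ 2 := by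
      have h0 : 0 ≤ ‖gradient (θ t) x‖ := norm_nonneg _
      nlinarith [sq_nonneg (c * A - B), mul_nonneg (mul_nonneg hc0 hA0) hB0]
    have hcub : c * u * b₀ ≤ γ₂ := by
      rw [← le_div_iff₀ hb₀]; exact hcu
    have h3 : c ^ 2 * u ≤ γ₂ ^ 2 / (b₀ ^ 2 * u) := by
      rw [le_div_iff₀ (by positivity : (0:ℝ) < b₀ ^ 2 * u)]
      nlinarith [mul_nonneg (mul_nonneg hc0 hu.le) hb₀.le]
    -- the real inequality
    have hreal : 2 * f u / u * ‖gradient (θ t) x‖ ^ 2 * u ≤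
        4 * (γ₂ ^ 3 * A ^ 2 / (b₀ ^ 2 * u) + γ₂ * B ^ 2 * u) := by
      have he : 2 * f u / u * ‖gradient (θ t) x‖ ^ 2 * u = 2 * f u * ‖gradient (θ t) x‖ ^ 2 := by
        field_simp
      rw [he]
      have hfnn' : 0 ≤ f u := hfnn u
      have hc1 : 2 * f u * ‖gradient (θ t) x‖ ^ 2 ≤ 2 * (γ₂ * u) * ‖gradient (θ t) x‖ ^ 2 := by
        apply mul_le_mul_of_nonneg_right _ (sq_nonneg _)
        linarith [hfu u hu]
      have hc2 : 2 * (γ₂ * u) * ‖gradient (θ t) x‖ ^ 2 ≤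
          2 * (γ₂ * u) * (2 * c ^ 2 * A ^ 2 + 2 * B ^ 2) := by
        apply mul_le_mul_of_nonneg_left hS2
        positivity
      have hc3 : 2 * (γ₂ * u) * (2 * c ^ 2 * A ^ 2 + 2 * B ^ 2) =
          4 * γ₂ * (c ^ 2 * u) * A ^ 2 + 4 * γ₂ * B ^ 2 * u := by ring
      have hc4 : 4 * γ₂ * (c ^ 2 * u) * A ^ 2 ≤ 4 * γ₂ * (γ₂ ^ 2 / (b₀ ^ 2 * u)) * A ^ 2 := by
        apply mul_le_mul_of_nonneg_right _ (sq_nonneg A)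
        apply mul_le_mul_of_nonneg_left h3
        positivity
      have hc5 : 4 * γ₂ * (γ₂ ^ 2 / (b₀ ^ 2 * u)) * A ^ 2 + 4 * γ₂ * B ^ 2 * u =
          4 * (γ₂ ^ 3 * A ^ 2 / (b₀ ^ 2 * u) + γ₂ * B ^ 2 * u) := by ring
      linarith
    calc ENNReal.ofReal (2 * f u / u * ‖gradient (θ t) x‖ ^ 2 * u)
        ≤ ENNReal.ofReal (4 * (γ₂ ^ 3 * A ^ 2 / (b₀ ^ 2 * u) + γ₂ * B ^ 2 * u)) :=
          ENNReal.ofReal_le_ofReal hreal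
      _ = 4 * ENNReal.ofReal (γ₂ ^ 3 * A ^ 2 / (b₀ ^ 2 * u) + γ₂ * B ^ 2 * u) := by
          rw [ENNReal.ofReal_mul (by norm_num : (0:ℝ) ≤ 4)]
          norm_num
  -- assemble
  calc (∫⁻ t in Set.Icc (0:ℝ) T, ∫⁻ x,
        ENNReal.ofReal (2 * f (p t x) / p t x * ‖gradient (θ t) x‖ ^ 2 * p t x))
      ≤ ∫⁻ t in Set.Icc (0:ℝ) T, ∫⁻ x,
        4 * ENNReal.ofReal (γ₂ ^ 3 * ‖gradient (p t) x‖ ^ 2 / (b₀ ^ 2 * p t x) +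
          γ₂ * ‖gradient Φ x‖ ^ 2 * p t x) :=
        lintegral_mono fun t => lintegral_mono fun x => key t x
    _ = ∫⁻ t in Set.Icc (0:ℝ) T, 4 * ∫⁻ x,
        ENNReal.ofReal (γ₂ ^ 3 * ‖gradient (p t) x‖ ^ 2 / (b₀ ^ 2 * p t x) +
          γ₂ * ‖gradient Φ x‖ ^ 2 * p t x) := by
        congr 1
        funext t
        exact lintegral_const_mul' 4 _ (by norm_num)
    _ = 4 * ∫⁻ t in Set.Icc (0:ℝ) T, ∫⁻ x,
        ENNReal.ofReal (γ₂ ^ 3 * ‖gradient (p t) x‖ ^ 2 / (b₀ ^ 2 * p t x) +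
          γ₂ * ‖gradient Φ x‖ ^ 2 * p t x) := lintegral_const_mul' 4 _ (by norm_num)
end
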